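/- Let X be a topological space and 𝒰 an open cover of X. There exists a 𝒰-small partition of unity on X if and only if there is a sequence of open covers 𝒰₁, 𝒰₂, … of X with 𝒰₁ = 𝒰 such that 𝒰_{n+1} is a star refinement of 𝒰_n for every n. -/

import Mathlib

noncomputable section
open Set Topology TopologicalSpace

/-- `𝒰` is an open cover of `X`. -/
def IsOpenCover {X : Type} [TopologicalSpace X] (𝒰 : Set (Set X)) : Prop :=
  (∀ U ∈ 𝒰, IsOpen U) ∧ ⋃₀ 𝒰 = univ

/-- Star of a point with respect to a family of sets. -/
def ptStar {X : Type} (x : X) (𝒰 : Set (Set X)) : Set X := ⋃₀ {U | U ∈ 𝒰 ∧ x ∈ U}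

/-- Star of a set with respect to a family of sets. -/
def setStar {X : Type} (A : Set X) (𝒰 : Set (Set X)) : Set X :=
  ⋃₀ {U | U ∈ 𝒰 ∧ (U ∩ A).Nonempty}

/-- `𝒱` star-refines `𝒰`. -/
def StarRefines {X : Type} (𝒱 𝒰 : Set (Set X)) : Prop :=
  ∀ x : X, ∃ U ∈ 𝒰, ptStar x 𝒱 ⊆ U

/-- A continuous partition of unity viewed as a map into `l¹(S)` with image in `Δ(S)`. -/
def IsPU {X S : Type} [TopologicalSpace X] (f : X → lp (fun _ : S => ℝ) 1) : Prop :=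
  Continuous f ∧ ∀ x : X, (∀ s : S, 0 ≤ f x s) ∧ HasSum (fun s => f x s) 1

/-- The partition of unity `f` is `𝒰`-small: each carrier lies in a member of `𝒰`. -/
def IsUSmall {X S : Type} [TopologicalSpace X] (𝒰 : Set (Set X))
    (f : X → lp (fun _ : S => ℝ) 1) : Prop :=
  ∀ s : S, ∃ U ∈ 𝒰, {x : X | f x s ≠ 0} ⊆ U

/-- There exists a `𝒰`-small partition of unity on `X`. -/
def ExistsUSmallPU {X : Type} [TopologicalSpace X] (𝒰 : Set (Set X)) : Prop :=
  ∃ (S : Type) (f : X → lp (fun _ : S => ℝ) 1), IsPU f ∧ IsUSmall 𝒰 f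

/-- An indexed family of sets is discrete. -/
def DiscreteFam {X S : Type} [TopologicalSpace X] (A : S → Set X) : Prop :=
  ∀ x : X, ∃ N ∈ nhds x, {s : S | (A s ∩ N).Nonempty}.Subsingleton

/-- A family of sets (as a set of sets) is discrete. -/
def DiscreteSetFam {X : Type} [TopologicalSpace X] (𝒜 : Set (Set X)) : Prop :=
  ∀ x : X, ∃ N ∈ nhds x, {A | A ∈ 𝒜 ∧ (A ∩ N).Nonempty}.Subsingleton

/-- `𝒰` has a σ-discrete closed refinement. -/
def HasSigmaDiscreteClosedRefinement {X : Type} [TopologicalSpace X]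
    (𝒰 : Set (Set X)) : Prop :=
  ∃ D : ℕ → Set (Set X), (∀ n, DiscreteSetFam (D n)) ∧
    (∀ n, ∀ F ∈ D n, IsClosed F) ∧
    (∀ n, ∀ F ∈ D n, ∃ U ∈ 𝒰, F ⊆ U) ∧
    ⋃₀ (⋃ n, D n) = univ

/-- `X` is collectionwise normal. -/
def CwNormal (X : Type) [TopologicalSpace X] : Prop :=
  ∀ (S : Type) (A : S → Set X), (∀ s, IsClosed (A s)) → DiscreteFam A →
    ∃ V : S → Set X, (∀ s, IsOpen (V s)) ∧ (∀ s, A s ⊆ V s) ∧ DiscreteFam V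

section Aux

theorem forward_dir {X S : Type} [TopologicalSpace X] {𝒰 : Set (Set X)} (h𝒰 : IsOpenCover 𝒰)
    (f : X → lp (fun _ : S => ℝ) 1) (hf : IsPU f) (hsmall : IsUSmall 𝒰 f) :
    ∃ U : ℕ → Set (Set X), U 0 = 𝒰 ∧ (∀ n, IsOpenCover (U n)) ∧
      ∀ n, StarRefines (U (n + 1)) (U n) := by
  by_cases hX : Nonempty X
  case neg =>
    refine ⟨fun _ => 𝒰, rfl, fun _ => h𝒰, fun n x => absurd ⟨x⟩ hX⟩
  -- basic facts
  have hnn : ∀ x s, 0 ≤ f x s := fun x s => (hf.2 x).1 s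
  have hsum : ∀ x, HasSum (fun s => f x s) 1 := fun x => (hf.2 x).2
  have hbound : ∀ x s, f x s ≤ ‖f x‖ := by
    intro x s
    have := lp.norm_apply_le_norm one_ne_zero (f x) s
    rw [Real.norm_eq_abs] at this
    exact (le_abs_self _).trans this
  have hbdd : ∀ x, BddAbove (Set.range fun s => f x s) := by
    intro x
    exact ⟨‖f x‖, by rintro _ ⟨s, rfl⟩; exact hbound x s⟩
  set ε : X → ℝ := fun x => ⨆ s, f x s with hε
  have hexpos : ∀ x, ∃ s, 0 < f x s := by
    intro x
    by_contra hc
    push_neg at hc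
    have : ∀ s, f x s = 0 := fun s => le_antisymm (hc s) (hnn x s)
    have h0 : HasSum (fun s => f x s) 0 := by
      simpa [this] using hasSum_zero (α := ℝ) (β := S)
    exact one_ne_zero ((hsum x).unique h0)
  have hS : Nonempty S := by
    obtain ⟨x⟩ := hX
    obtain ⟨s, _⟩ := hexpos x
    exact ⟨s⟩
  have hεle : ∀ x s, f x s ≤ ε x := fun x s => le_ciSup (hbdd x) s
  have hεpos : ∀ x, 0 < ε x := by
    intro x
    obtain ⟨s, hs⟩ := hexpos x
    exact hs.trans_le (hεle x s)
  have hlip : ∀ x y, ε x ≤ ε y + ‖f x - f y‖ := by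
    intro x y
    refine ciSup_le fun s => ?_
    have h1 : f x s - f y s ≤ ‖f x - f y‖ := by
      have h2 : f x s - f y s ≤ |f x s - f y s| := le_abs_self _
      have h3 : |f x s - f y s| ≤ ‖f x - f y‖ := by
        have := lp.norm_apply_le_norm one_ne_zero (f x - f y) s
        rwa [lp.coeFn_sub, Pi.sub_apply, Real.norm_eq_abs] at this
      exact h2.trans h3
    have := hεle y s
    linarith
  have hkey : ∀ x, ∃ U ∈ 𝒰, ∀ y, ‖f y - f x‖ < ε x / 2 → y ∈ U := by
    intro x
    have h2 : ε x / 2 < ε x := by have := hεpos x; linarith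
    obtain ⟨s, hs⟩ := exists_lt_of_lt_ciSup (h2.trans_le (le_refl _))
    obtain ⟨U, hU, hsub⟩ := hsmall s
    refine ⟨U, hU, fun y hy => hsub ?_⟩
    have h3 : |f y s - f x s| ≤ ‖f y - f x‖ := by
      have := lp.norm_apply_le_norm one_ne_zero (f y - f x) s
      rwa [lp.coeFn_sub, Pi.sub_apply, Real.norm_eq_abs] at this
    have h4 : f x s - f y s ≤ |f y s - f x s| := by
      rw [abs_sub_comm]; exact le_abs_self _
    have : 0 < f y s := by linarith
    exact this.ne'
  -- the balls
  set B : ℕ → X → Set X := fun n x => {y | ‖f y - f x‖ < (8:ℝ)⁻¹ ^ n * (ε x / 2)} with hB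
  set Useq : ℕ → Set (Set X) := fun n =>
    match n with
    | 0 => 𝒰
    | (m+1) => {V | ∃ x : X, V = B (m+1) x} with hUseq
  have hBopen : ∀ n x, IsOpen (B n x) := by
    intro n x
    have : Continuous fun y => ‖f y - f x‖ := (hf.1.sub continuous_const).norm
    exact isOpen_Iio.preimage this
  have hBmem : ∀ n x, x ∈ B n x := by
    intro n x
    simp only [hB, mem_setOf_eq, sub_self, norm_zero]
    have := hεpos x
    positivity
  have hcover : ∀ n, IsOpenCover (Useq n) := by
    intro n
    match n with
    | 0 => exact h𝒰
    | (m+1) =>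
      constructor
      · rintro V ⟨x, rfl⟩
        exact hBopen _ x
      · refine eq_univ_of_forall fun x => ?_
        exact ⟨B (m+1) x, ⟨x, rfl⟩, hBmem _ x⟩
  -- star estimate
  have hstar_est : ∀ n (y : X), ptStar y (Useq (n+1)) ⊆
      {z | ‖f z - f y‖ < (8:ℝ)⁻¹ ^ (n+1) * (2 * ε y)} := by
    intro n y z hz
    obtain ⟨V, ⟨hV, hyV⟩, hzV⟩ := hz
    obtain ⟨x, rfl⟩ := hV
    set δ : ℝ := (8:ℝ)⁻¹ ^ (n+1) with hδ
    have hδpos : 0 < δ := by positivity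
    have hδle : δ ≤ 8⁻¹ := by
      rw [hδ]
      calc (8:ℝ)⁻¹ ^ (n+1) ≤ 8⁻¹ ^ 1 := by
            apply pow_le_pow_of_le_one (by norm_num) (by norm_num) (by omega)
        _ = 8⁻¹ := pow_one _
    have h1 : ‖f y - f x‖ < δ * (ε x / 2) := hyV
    have h2 : ‖f z - f x‖ < δ * (ε x / 2) := hzV
    have hεx : ε x ≤ ε y + δ * (ε x / 2) := by
      have := hlip x y
      have hrev : ‖f x - f y‖ = ‖f y - f x‖ := norm_sub_rev _ _
      linarith [this, h1, hrev ▸ this]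
    have hεxy : ε x ≤ (16/15) * ε y := by nlinarith [hεpos x, hεpos y]
    have h3 : ‖f z - f y‖ ≤ ‖f z - f x‖ + ‖f x - f y‖ := norm_sub_le_norm_sub_add_norm_sub _ _ _
    have hrev : ‖f x - f y‖ = ‖f y - f x‖ := norm_sub_rev _ _
    have : ‖f z - f y‖ < δ * ε x := by rw [hrev] at h3; linarith
    have : ‖f z - f y‖ < δ * (2 * ε y) := by nlinarith [hεpos y]
    exact this
  refine ⟨Useq, rfl, hcover, fun n => ?_⟩
  intro y
  match n with
  | 0 =>
    obtain ⟨U, hU, hsub⟩ := hkey y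
    refine ⟨U, hU, fun z hz => ?_⟩
    have := hstar_est 0 y hz
    refine hsub z ?_
    have h8 : (8:ℝ)⁻¹ ^ (0+1) * (2 * ε y) ≤ ε y / 2 := by
      have := hεpos y; rw [pow_one]; linarith
    exact lt_of_lt_of_le this h8
  | (m+1) =>
    refine ⟨B (m+1) y, ⟨y, rfl⟩, fun z hz => ?_⟩
    have := hstar_est (m+1) y hz
    have h8 : (8:ℝ)⁻¹ ^ (m+1+1) * (2 * ε y) ≤ (8:ℝ)⁻¹ ^ (m+1) * (ε y / 2) := by
      have h9 : (8:ℝ)⁻¹ ^ (m+1+1) = (8:ℝ)⁻¹ ^ (m+1) * 8⁻¹ := pow_succ _ _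
      have h10 : (0:ℝ) < (8:ℝ)⁻¹ ^ (m+1) := by positivity
      have := hεpos y
      rw [h9]
      nlinarith
    have hlt : ‖f z - f y‖ < (8:ℝ)⁻¹ ^ (m+1) * (ε y / 2) := lt_of_lt_of_le this h8
    exact hlt


section PB
open Metric

theorem pseudoMetric_normal (Y : Type*) [PseudoMetricSpace Y] : NormalSpace Y := by
  constructor
  intro s t hs ht hd
  rcases s.eq_empty_or_nonempty with rfl | hsne
  · exact SeparatedNhds.empty_left t
  rcases t.eq_empty_or_nonempty with rfl | htne
  · exact SeparatedNhds.empty_right s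
  refine ⟨{x | infDist x s < infDist x t}, {x | infDist x t < infDist x s},
    ?_, ?_, ?_, ?_, ?_⟩
  · exact isOpen_lt (continuous_infDist_pt s) (continuous_infDist_pt t)
  · exact isOpen_lt (continuous_infDist_pt t) (continuous_infDist_pt s)
  · intro x hx
    have h1 : infDist x s = 0 := infDist_zero_of_mem hx
    have h2 : 0 < infDist x t := by
      rw [← ht.notMem_iff_infDist_pos htne]
      exact fun hxt => (disjoint_left.1 hd hx) hxt
    simpa [h1] using h2
  · intro x hx
    have h1 : infDist x t = 0 := infDist_zero_of_mem hx
    have h2 : 0 < infDist x s := by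
      rw [← hs.notMem_iff_infDist_pos hsne]
      exact fun hxs => (disjoint_left.1 hd hxs) hx
    simpa [h1] using h2
  · rw [Set.disjoint_left]
    intro x h1 h2
    exact absurd h1 (by simpa using le_of_lt h2)

theorem pullback_PU {X : Type} [TopologicalSpace X] (Y : Type) [PseudoMetricSpace Y]
    (𝒰 : Set (Set X)) (φ : X → Y) (hφ : Continuous φ)
    (hball : ∀ y : Y, ∃ U ∈ 𝒰, φ ⁻¹' (Metric.ball y (1/4)) ⊆ U) :
    ExistsUSmallPU 𝒰 := by
  classical
  haveI := pseudoMetric_normal Y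
  obtain ⟨p, hp⟩ := PartitionOfUnity.exists_isSubordinate (s := univ) (ι := Y)
    isClosed_univ (fun y : Y => Metric.ball y (1/8)) (fun y => Metric.isOpen_ball)
    (by intro x _; exact mem_iUnion.2 ⟨x, Metric.mem_ball_self (by norm_num)⟩)
  have hfin : ∀ y : Y, {i : Y | p i y ≠ 0}.Finite := by
    intro y
    have := p.locallyFinite.point_finite y
    simpa [Function.support] using this
  have hmem : ∀ x : X, Memℓp (fun i : Y => (p i (φ x) : ℝ)) 1 := by
    intro x
    apply memℓp_gen
    simp only [ENNReal.toReal_one, Real.rpow_one]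
    have : ∀ i ∉ (hfin (φ x)).toFinset, ‖(p i (φ x) : ℝ)‖ = 0 := by
      intro i hi
      simp only [Set.Finite.mem_toFinset, mem_setOf_eq, not_not] at hi
      simp [hi]
    exact (hasSum_sum_of_ne_finset_zero this).summable
  set f : X → lp (fun _ : Y => ℝ) 1 := fun x => ⟨fun i => p i (φ x), hmem x⟩ with hfdef
  have hcoords : ∀ x i, f x i = p i (φ x) := fun x i => rfl
  have hcont : Continuous f := by
    rw [continuous_iff_continuousAt]
    intro x₀
    obtain ⟨N', hN', hTfin⟩ := p.locallyFinite (φ x₀)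
    set T := hTfin.toFinset with hT
    set g : X → lp (fun _ : Y => ℝ) 1 :=
      fun x => ∑ i ∈ T, (p i (φ x) : ℝ) • lp.single 1 i (1:ℝ) with hg
    have hgc : Continuous g := by
      apply continuous_finset_sum
      intro i _
      exact (((p i).continuous).comp hφ).smul continuous_const
    have heq : ∀ x, φ x ∈ N' → f x = g x := by
      intro x hx
      apply lp.ext
      funext j
      have hrhs : (g x : ∀ _ : Y, ℝ) j = ∑ i ∈ T, (p i (φ x) : ℝ) • (lp.single 1 i (1:ℝ) : ∀ _ : Y, ℝ) j := by
        rw [hg]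
        simp only [lp.coeFn_sum, lp.coeFn_smul]
        rw [Finset.sum_apply]
        rfl
      rw [hcoords, hrhs]
      have hsingle : ∀ i : Y, ((p i (φ x) : ℝ) • (lp.single 1 i (1:ℝ) : ∀ _ : Y, ℝ) j)
          = if j = i then (p i (φ x) : ℝ) else 0 := by
        intro i
        by_cases hji : j = i
        · subst hji
          simp [lp.single_apply_self]
        · simp [lp.single_apply_ne 1 i _ hji, hji]
      rw [Finset.sum_congr rfl (fun i _ => hsingle i)]
      rw [Finset.sum_ite_eq]
      by_cases hj : j ∈ T
      · simp [hj]
      · simp only [hj, if_false]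
        by_contra hne
        apply hj
        rw [hT, Set.Finite.mem_toFinset]
        exact ⟨φ x, by simpa [Function.mem_support] using hne, hx⟩
    have hev : f =ᶠ[nhds x₀] g := by
      filter_upwards [hφ.continuousAt hN'] with x hx using heq x hx
    exact (hgc.continuousAt).congr hev.symm
  refine ⟨Y, f, ⟨hcont, ?_⟩, ?_⟩
  · intro x
    refine ⟨fun i => p.nonneg i (φ x), ?_⟩
    have h1 : ∀ i ∉ (hfin (φ x)).toFinset, (p i (φ x) : ℝ) = 0 := by
      intro i hi
      simpa [Set.Finite.mem_toFinset, not_not] using hi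
    have h2 : HasSum (fun i => (p i (φ x) : ℝ)) (∑ i ∈ (hfin (φ x)).toFinset, (p i (φ x) : ℝ)) :=
      hasSum_sum_of_ne_finset_zero h1
    have h3 : ∑ i ∈ (hfin (φ x)).toFinset, (p i (φ x) : ℝ) = 1 := by
      have h4 := p.sum_eq_one (mem_univ (φ x))
      rw [finsum_eq_sum _ (hfin (φ x))] at h4
      convert h4 using 2 <;> simp [Function.support]
    rwa [h3] at h2
  · intro i
    obtain ⟨U, hU, hsub⟩ := hball i
    refine ⟨U, hU, fun x hx => hsub ?_⟩
    have h1 : φ x ∈ tsupport (p i) := subset_tsupport _ (by simpa [Function.mem_support] using hx)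
    have h2 : φ x ∈ Metric.ball i (1/8) := hp i h1
    exact mem_preimage.2 (Metric.ball_subset_ball (by norm_num) h2)

end PB

variable {X : Type} [TopologicalSpace X]

section DConstruction

variable (U : ℕ → Set (Set X))

def relAt (m : ℕ) (x y : X) : Prop := ∃ A ∈ U m, x ∈ A ∧ y ∈ A

def Wrel (n : ℕ) (x y : X) : Prop := relAt U (2*n) x y

def DS (x y : X) : Set ℝ := insert (1:ℝ) {r | ∃ n, Wrel U n x y ∧ r = (2:ℝ)⁻¹ ^ n}

def Dfun (x y : X) : ℝ := sInf (DS U x y)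

variable {U}

theorem relAt_refl (hcov : ∀ n, IsOpenCover (U n)) (m : ℕ) (x : X) : relAt U m x x := by
  have hx : x ∈ ⋃₀ U m := by rw [(hcov m).2]; trivial
  obtain ⟨A, hA, hxA⟩ := hx
  exact ⟨A, hA, hxA, hxA⟩

theorem relAt_symm {m : ℕ} {x y : X} (h : relAt U m x y) : relAt U m y x := by
  obtain ⟨A, hA, h1, h2⟩ := h
  exact ⟨A, hA, h2, h1⟩

theorem relAt_step (hstar : ∀ n, StarRefines (U (n+1)) (U n)) {m : ℕ} {x y : X}
    (h : relAt U (m+1) x y) : relAt U m x y := by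
  obtain ⟨A, hA, h1, h2⟩ := h
  obtain ⟨B, hB, hsub⟩ := hstar m x
  have hA' : A ⊆ ptStar x (U (m+1)) := fun z hz => ⟨A, ⟨hA, h1⟩, hz⟩
  exact ⟨B, hB, hsub (hA' h1), hsub (hA' h2)⟩

theorem relAt_mono (hstar : ∀ n, StarRefines (U (n+1)) (U n)) {m m' : ℕ} (hm : m ≤ m')
    {x y : X} (h : relAt U m' x y) : relAt U m x y := by
  induction m' with
  | zero => simpa [Nat.le_zero.1 hm] using h
  | succ n ih =>
    rcases Nat.le_succ_iff.mp hm with h' | rfl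
    · exact ih h' (relAt_step hstar h)
    · exact h

theorem relAt_chain3 (hstar : ∀ n, StarRefines (U (n+1)) (U n)) {m : ℕ} {x y z w : X}
    (h1 : relAt U (m+2) x y) (h2 : relAt U (m+2) y z) (h3 : relAt U (m+2) z w) :
    relAt U m x w := by
  obtain ⟨A, hA, hxA, hyA⟩ := h1
  obtain ⟨B, hB, hyB, hzB⟩ := h2
  obtain ⟨C, hC, hzC, hwC⟩ := h3
  obtain ⟨P, hP, hPsub⟩ := hstar (m+1) y
  have hxP : x ∈ P := hPsub ⟨A, ⟨hA, hyA⟩, hxA⟩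
  have hzP : z ∈ P := hPsub ⟨B, ⟨hB, hyB⟩, hzB⟩
  obtain ⟨Q, hQ, hQsub⟩ := hstar (m+1) z
  have hwQ : w ∈ Q := hQsub ⟨C, ⟨hC, hzC⟩, hwC⟩
  have hzQ : z ∈ Q := hQsub ⟨C, ⟨hC, hzC⟩, hzC⟩
  obtain ⟨R, hR, hRsub⟩ := hstar m z
  have hxR : x ∈ R := hRsub ⟨P, ⟨hP, hzP⟩, hxP⟩
  have hwR : w ∈ R := hRsub ⟨Q, ⟨hQ, hzQ⟩, hwQ⟩
  exact ⟨R, hR, hxR, hwR⟩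

theorem Wrel_refl (hcov : ∀ n, IsOpenCover (U n)) (n : ℕ) (x : X) : Wrel U n x x :=
  relAt_refl hcov _ x

theorem Wrel_symm {n : ℕ} {x y : X} (h : Wrel U n x y) : Wrel U n y x := relAt_symm h

theorem Wrel_mono (hstar : ∀ n, StarRefines (U (n+1)) (U n)) {n n' : ℕ} (hn : n ≤ n')
    {x y : X} (h : Wrel U n' x y) : Wrel U n x y :=
  relAt_mono hstar (by omega) h

theorem Wrel_chain3 (hstar : ∀ n, StarRefines (U (n+1)) (U n)) {n : ℕ} {x y z w : X}
    (h1 : Wrel U (n+1) x y) (h2 : Wrel U (n+1) y z) (h3 : Wrel U (n+1) z w) :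
    Wrel U n x w := by
  have h1' : relAt U (2*n+2) x y := by simpa [Wrel, Nat.mul_succ] using h1
  have h2' : relAt U (2*n+2) y z := by simpa [Wrel, Nat.mul_succ] using h2
  have h3' : relAt U (2*n+2) z w := by simpa [Wrel, Nat.mul_succ] using h3
  exact relAt_chain3 hstar h1' h2' h3'

theorem DS_nonempty (x y : X) : (DS U x y).Nonempty := ⟨1, Or.inl rfl⟩

theorem DS_bddBelow (x y : X) : BddBelow (DS U x y) := by
  refine ⟨0, fun r hr => ?_⟩
  rcases hr with rfl | ⟨n, _, rfl⟩
  · norm_num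
  · positivity

theorem Dfun_nonneg (x y : X) : 0 ≤ Dfun U x y := by
  apply le_csInf (DS_nonempty x y)
  intro r hr
  rcases hr with rfl | ⟨n, _, rfl⟩
  · norm_num
  · positivity

theorem Dfun_le_one (x y : X) : Dfun U x y ≤ 1 := csInf_le (DS_bddBelow x y) (Or.inl rfl)

theorem Dfun_symm (x y : X) : Dfun U x y = Dfun U y x := by
  unfold Dfun
  congr 1
  unfold DS
  ext r
  constructor <;> rintro (rfl | ⟨n, hw, rfl⟩)
  · exact Or.inl rfl
  · exact Or.inr ⟨n, Wrel_symm hw, rfl⟩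
  · exact Or.inl rfl
  · exact Or.inr ⟨n, Wrel_symm hw, rfl⟩

theorem Dfun_le_of_Wrel {n : ℕ} {x y : X} (h : Wrel U n x y) :
    Dfun U x y ≤ (2:ℝ)⁻¹ ^ n := csInf_le (DS_bddBelow x y) (Or.inr ⟨n, h, rfl⟩)

theorem Dfun_self (hcov : ∀ n, IsOpenCover (U n)) (x : X) : Dfun U x x = 0 := by
  refine le_antisymm ?_ (Dfun_nonneg x x)
  by_contra hpos
  push_neg at hpos
  obtain ⟨n, hn⟩ := exists_pow_lt_of_lt_one hpos (by norm_num : (2:ℝ)⁻¹ < 1)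
  have hle := Dfun_le_of_Wrel (Wrel_refl hcov n x)
  linarith

theorem Wrel_of_Dfun_lt (hstar : ∀ n, StarRefines (U (n+1)) (U n)) {n : ℕ} {x y : X}
    (h : Dfun U x y < (2:ℝ)⁻¹ ^ n) : Wrel U (n+1) x y := by
  by_contra hw
  have hle : (2:ℝ)⁻¹ ^ n ≤ Dfun U x y := by
    apply le_csInf (DS_nonempty x y)
    intro r hr
    rcases hr with rfl | ⟨m, hm, rfl⟩
    · exact pow_le_one₀ (by norm_num) (by norm_num)
    · have hmn : m ≤ n := by
        by_contra hmn
        push_neg at hmn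
        exact hw (Wrel_mono hstar (by omega) hm)
      exact pow_le_pow_of_le_one (by norm_num) (by norm_num) hmn
  linarith

theorem Dfun_link3 (hcov : ∀ n, IsOpenCover (U n))
    (hstar : ∀ n, StarRefines (U (n+1)) (U n)) {x y z w : X} {t : ℝ}
    (h1 : Dfun U x y ≤ t) (h2 : Dfun U y z ≤ t) (h3 : Dfun U z w ≤ t) :
    Dfun U x w ≤ 2 * t := by
  have ht0 : 0 ≤ t := (Dfun_nonneg x y).trans h1
  rcases le_or_gt (1/2 : ℝ) t with hhalf | hhalf
  · have := Dfun_le_one (U := U) x w; linarith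
  have key : ∀ n : ℕ, t < (2:ℝ)⁻¹ ^ n → Dfun U x w ≤ (2:ℝ)⁻¹ ^ n := by
    intro n hn
    have w1 : Wrel U (n+1) x y := Wrel_of_Dfun_lt hstar (by linarith)
    have w2 : Wrel U (n+1) y z := Wrel_of_Dfun_lt hstar (by linarith)
    have w3 : Wrel U (n+1) z w := Wrel_of_Dfun_lt hstar (by linarith)
    exact Dfun_le_of_Wrel (Wrel_chain3 hstar w1 w2 w3)
  rcases eq_or_lt_of_le ht0 with rfl | htpos
  · rw [mul_zero]
    by_contra hpos
    push_neg at hpos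
    obtain ⟨n, hn⟩ := exists_pow_lt_of_lt_one hpos (by norm_num : (2:ℝ)⁻¹ < 1)
    have := key n (by positivity)
    linarith
  · have hex : ∃ k, (2:ℝ)⁻¹ ^ k ≤ t := by
      obtain ⟨k, hk⟩ := exists_pow_lt_of_lt_one htpos (by norm_num : (2:ℝ)⁻¹ < 1)
      exact ⟨k, hk.le⟩
    classical
    have hk1 : (2:ℝ)⁻¹ ^ (Nat.find hex) ≤ t := Nat.find_spec hex
    have hkpos : Nat.find hex ≠ 0 := by
      intro h0
      rw [h0, pow_zero] at hk1
      linarith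
    obtain ⟨n, heq⟩ := Nat.exists_eq_succ_of_ne_zero hkpos
    rw [heq, Nat.succ_eq_add_one] at hk1
    have hmin := Nat.find_min hex (m := n) (by omega)
    push_neg at hmin
    have hkey := key n hmin
    have hp : (2:ℝ)⁻¹ ^ n = 2 * (2:ℝ)⁻¹ ^ (n+1) := by rw [pow_succ]; ring
    rw [hp] at hkey
    have : (2:ℝ)⁻¹ ^ (n+1) = (2:ℝ)⁻¹ ^ (n.succ) := rfl
    linarith [hk1]

end DConstruction

theorem Dfun_chain {U : ℕ → Set (Set X)} (hcov : ∀ n, IsOpenCover (U n))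
    (hstar : ∀ n, StarRefines (U (n+1)) (U n)) :
    ∀ k : ℕ, ∀ c : ℕ → X,
      Dfun U (c 0) (c k) ≤ 2 * ∑ i ∈ Finset.range k, Dfun U (c i) (c (i+1)) := by
  intro k
  induction k using Nat.strong_induction_on with
  | _ k ih =>
    match k with
    | 0 => intro c; simp [Dfun_self hcov]
    | (k+1) =>
      intro c
      classical
      set s := ∑ i ∈ Finset.range (k+1), Dfun U (c i) (c (i+1)) with hs
      have hs0 : 0 ≤ s := Finset.sum_nonneg fun i _ => Dfun_nonneg _ _
      set J := (Finset.range (k+1)).filter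
        (fun j => ∑ i ∈ Finset.range j, Dfun U (c i) (c (i+1)) ≤ s/2) with hJ
      have hJne : J.Nonempty := by
        refine ⟨0, Finset.mem_filter.2 ⟨Finset.mem_range.2 (by omega), ?_⟩⟩
        simp only [Finset.range_zero, Finset.sum_empty]
        linarith
      set j := J.max' hJne with hj
      have hjJ : j ∈ J := J.max'_mem hJne
      have hjlt : j < k + 1 := Finset.mem_range.1 (Finset.mem_filter.1 hjJ).1
      have hjpre : ∑ i ∈ Finset.range j, Dfun U (c i) (c (i+1)) ≤ s/2 :=
        (Finset.mem_filter.1 hjJ).2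
      -- first link
      have ha : Dfun U (c 0) (c j) ≤ s := by
        have := ih j (by omega) c
        linarith
      -- middle link
      have hb : Dfun U (c j) (c (j+1)) ≤ s := by
        have := Finset.single_le_sum (f := fun i => Dfun U (c i) (c (i+1)))
          (fun i _ => Dfun_nonneg _ _) (Finset.mem_range.2 hjlt)
        linarith
      -- tail sum bound
      have htail : ∑ i ∈ Finset.range (k - j), Dfun U (c (j+1+i)) (c (j+1+i+1)) ≤ s/2 := by
        by_cases hjk : j = k
        · rw [hjk, Nat.sub_self]
          simp only [Finset.range_zero, Finset.sum_empty]
          linarith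
        · have hjk' : j + 1 < k + 1 := by omega
          have hnotJ : ¬ (∑ i ∈ Finset.range (j+1), Dfun U (c i) (c (i+1)) ≤ s/2) := by
            intro hcon
            have : j + 1 ∈ J := Finset.mem_filter.2 ⟨Finset.mem_range.2 hjk', hcon⟩
            have := J.le_max' _ this
            omega
          push_neg at hnotJ
          have h1 : s = (∑ i ∈ Finset.Ico 0 (j+1), Dfun U (c i) (c (i+1)))
              + ∑ i ∈ Finset.Ico (j+1) (k+1), Dfun U (c i) (c (i+1)) := by
            rw [hs, Finset.range_eq_Ico,
              ← Finset.sum_Ico_consecutive _ (Nat.zero_le (j+1)) (by omega : j+1 ≤ k+1)]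
          have h2 : ∑ i ∈ Finset.Ico (j+1) (k+1), Dfun U (c i) (c (i+1))
              = ∑ i ∈ Finset.range (k - j), Dfun U (c (j+1+i)) (c (j+1+i+1)) := by
            rw [Finset.sum_Ico_eq_sum_range, show k + 1 - (j + 1) = k - j from by omega]
          have h3 : (∑ i ∈ Finset.Ico 0 (j+1), Dfun U (c i) (c (i+1)))
              = ∑ i ∈ Finset.range (j+1), Dfun U (c i) (c (i+1)) := by
            rw [Finset.range_eq_Ico]
          linarith [Finset.sum_nonneg
            (fun i (_ : i ∈ Finset.range (k - j)) => Dfun_nonneg (U := U) (c (j+1+i)) (c (j+1+i+1)))]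
      -- last link
      have hc : Dfun U (c (j+1)) (c (k+1)) ≤ s := by
        have h := ih (k - j) (by omega) (fun i => c (j+1+i))
        simp only [← Nat.add_assoc, Nat.add_zero] at h
        have e2 : j + 1 + (k - j) = k + 1 := by omega
        rw [e2] at h
        linarith
      have := Dfun_link3 hcov hstar ha hb hc
      linarith

variable (U) in
def CS (x y : X) : Set ℝ :=
  {r | ∃ (k : ℕ) (c : ℕ → X), c 0 = x ∧ c k = y ∧
    r = ∑ i ∈ Finset.range k, Dfun U (c i) (c (i+1))}

variable (U) in
def dCh (x y : X) : ℝ := sInf (CS U x y)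

theorem Dfun_mem_CS (x y : X) : Dfun U x y ∈ CS U x y := by
  refine ⟨1, fun i => if i = 0 then x else y, if_pos rfl, if_neg one_ne_zero, ?_⟩
  rw [Finset.sum_range_one]
  simp

theorem CS_nonempty (x y : X) : (CS U x y).Nonempty := ⟨_, Dfun_mem_CS x y⟩

theorem CS_bddBelow (x y : X) : BddBelow (CS U x y) := by
  refine ⟨0, fun r hr => ?_⟩
  obtain ⟨k, c, _, _, rfl⟩ := hr
  exact Finset.sum_nonneg fun i _ => Dfun_nonneg _ _

theorem dCh_nonneg (x y : X) : 0 ≤ dCh U x y := by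
  apply le_csInf (CS_nonempty x y)
  intro r hr
  obtain ⟨k, c, _, _, rfl⟩ := hr
  exact Finset.sum_nonneg fun i _ => Dfun_nonneg _ _

theorem dCh_le_Dfun (x y : X) : dCh U x y ≤ Dfun U x y :=
  csInf_le (CS_bddBelow x y) (Dfun_mem_CS x y)

theorem Dfun_le_two_dCh {U : ℕ → Set (Set X)} (hcov : ∀ n, IsOpenCover (U n))
    (hstar : ∀ n, StarRefines (U (n+1)) (U n)) (x y : X) :
    Dfun U x y ≤ 2 * dCh U x y := by
  have : Dfun U x y / 2 ≤ dCh U x y := by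
    apply le_csInf (CS_nonempty x y)
    rintro r ⟨k, c, h0, hk, rfl⟩
    have := Dfun_chain hcov hstar k c
    rw [h0, hk] at this
    linarith
  linarith

theorem dCh_self (x : X) : dCh U x x = 0 := by
  refine le_antisymm ?_ (dCh_nonneg x x)
  apply csInf_le (CS_bddBelow x x)
  exact ⟨0, fun _ => x, rfl, rfl, by simp⟩

theorem CS_subset_symm (x y : X) : CS U x y ⊆ CS U y x := by
  rintro r ⟨k, c, h0, hk, rfl⟩
  refine ⟨k, fun i => c (k - i), by simpa using hk, by simpa using h0, ?_⟩
  have hrefl := Finset.sum_range_reflect (fun i => Dfun U (c i) (c (i+1))) k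
  rw [← hrefl]
  apply Finset.sum_congr rfl
  intro i hi
  have hik : i < k := Finset.mem_range.1 hi
  show Dfun U (c (k - 1 - i)) (c (k - 1 - i + 1)) = Dfun U (c (k - i)) (c (k - (i + 1)))
  have e2 : k - 1 - i + 1 = k - i := by omega
  have e3 : k - (i + 1) = k - 1 - i := by omega
  rw [e2, Dfun_symm, e3]

theorem dCh_comm (x y : X) : dCh U x y = dCh U y x := by
  unfold dCh
  rw [Set.Subset.antisymm (CS_subset_symm x y) (CS_subset_symm y x)]

theorem dCh_triangle (x y z : X) : dCh U x z ≤ dCh U x y + dCh U y z := by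
  classical
  have hconcat : ∀ r ∈ CS U x y, ∀ r' ∈ CS U y z, r + r' ∈ CS U x z := by
    rintro r ⟨k, c, h0, hk, rfl⟩ r' ⟨k', c', h0', hk', rfl⟩
    set cc : ℕ → X := fun i => if i < k then c i else c' (i - k) with hcc
    have hcc_eq : ∀ i ≤ k, cc i = c i := by
      intro i hik
      rcases lt_or_eq_of_le hik with hlt | rfl
      · simp only [hcc]
        exact if_pos hlt
      · simp only [hcc, lt_irrefl, if_neg (lt_irrefl i), Nat.sub_self]
        rw [h0', ← hk]
    have hcc_shift : ∀ i, cc (k + i) = c' i := by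
      intro i
      simp only [hcc, if_neg (by omega : ¬ (k + i < k))]
      rw [show k + i - k = i from by omega]
    refine ⟨k + k', cc, ?_, ?_, ?_⟩
    · rw [hcc_eq 0 (Nat.zero_le k), h0]
    · rw [show k + k' = k + k' from rfl, hcc_shift k', hk']
    · have e1 : ∑ i ∈ Finset.range (k + k'), Dfun U (cc i) (cc (i+1))
          = (∑ i ∈ Finset.Ico 0 k, Dfun U (cc i) (cc (i+1)))
            + ∑ i ∈ Finset.Ico k (k + k'), Dfun U (cc i) (cc (i+1)) := by
        rw [Finset.range_eq_Ico,
          ← Finset.sum_Ico_consecutive _ (Nat.zero_le k) (by omega : k ≤ k + k')]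
      have e2 : (∑ i ∈ Finset.Ico 0 k, Dfun U (cc i) (cc (i+1)))
          = ∑ i ∈ Finset.range k, Dfun U (c i) (c (i+1)) := by
        rw [← Finset.range_eq_Ico]
        apply Finset.sum_congr rfl
        intro i hi
        have hik : i < k := Finset.mem_range.1 hi
        rw [hcc_eq i (by omega), hcc_eq (i+1) (by omega)]
      have e3 : (∑ i ∈ Finset.Ico k (k + k'), Dfun U (cc i) (cc (i+1)))
          = ∑ i ∈ Finset.range k', Dfun U (c' i) (c' (i+1)) := by
        rw [Finset.sum_Ico_eq_sum_range, show k + k' - k = k' from by omega]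
        apply Finset.sum_congr rfl
        intro i _
        rw [show k + i + 1 = k + (i + 1) from by omega, hcc_shift i, hcc_shift (i+1)]
      rw [e1, e2, e3]
  have step1 : ∀ r ∈ CS U x y, ∀ r' ∈ CS U y z, dCh U x z ≤ r + r' := by
    intro r hr r' hr'
    exact csInf_le (CS_bddBelow x z) (hconcat r hr r' hr')
  have h1 : ∀ r' ∈ CS U y z, dCh U x z - r' ≤ dCh U x y := by
    intro r' h'
    apply le_csInf (CS_nonempty x y)
    intro r hr
    have := step1 r hr r' h'
    linarith
  have h2 : dCh U x z - dCh U x y ≤ dCh U y z := by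
    apply le_csInf (CS_nonempty y z)
    intro r' h'
    have := h1 r' h'
    linarith
  linarith

def MCopy (X : Type) : Type := X

theorem backward_dir {X : Type} [TopologicalSpace X] {𝒰 : Set (Set X)}
    (U : ℕ → Set (Set X)) (hU0 : U 0 = 𝒰) (hcov : ∀ n, IsOpenCover (U n))
    (hstar : ∀ n, StarRefines (U (n+1)) (U n)) : ExistsUSmallPU 𝒰 := by
  letI : PseudoMetricSpace (MCopy X) :=
    { dist := fun a b => dCh U (a : X) (b : X)
      dist_self := fun a => dCh_self (X := X) (U := U) a
      dist_comm := fun a b => dCh_comm (X := X) (U := U) a b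
      dist_triangle := fun a b c => dCh_triangle (X := X) (U := U) a b c }
  set φ : X → MCopy X := fun x => (x : MCopy X) with hφdef
  have hdist : ∀ x y : X, dist (φ x) (φ y) = dCh U x y := fun x y => rfl
  -- continuity of φ
  have hφc : Continuous φ := by
    rw [continuous_iff_continuousAt]
    intro x
    rw [ContinuousAt, Metric.tendsto_nhds]
    intro ε hε
    obtain ⟨n, hn⟩ := exists_pow_lt_of_lt_one hε (by norm_num : (2:ℝ)⁻¹ < 1)
    have hx : x ∈ ⋃₀ U (2*n) := by rw [(hcov (2*n)).2]; trivial
    obtain ⟨A, hA, hxA⟩ := hx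
    have hAopen : IsOpen A := (hcov (2*n)).1 A hA
    filter_upwards [hAopen.mem_nhds hxA] with y hyA
    have hw : Wrel U n y x := ⟨A, hA, hyA, hxA⟩
    calc dist (φ y) (φ x) = dCh U y x := hdist y x
      _ ≤ Dfun U y x := dCh_le_Dfun y x
      _ ≤ (2:ℝ)⁻¹ ^ n := Dfun_le_of_Wrel hw
      _ < ε := hn
  -- ball condition
  have hball : ∀ y : MCopy X, ∃ V ∈ 𝒰, φ ⁻¹' (Metric.ball y (1/4)) ⊆ V := by
    intro y
    -- ptStar y (U (m+1)) is contained in a member of U 0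
    have hdown : ∀ m : ℕ, ∃ B ∈ U 0, ptStar (y : X) (U (m+1)) ⊆ B := by
      intro m
      induction m with
      | zero => exact hstar 0 (y : X)
      | succ m ih =>
        obtain ⟨C, hC, hCsub⟩ := hstar (m+1) (y : X)
        obtain ⟨B, hB, hBsub⟩ := ih
        have hyC : (y : X) ∈ C := by
          have hy : (y : X) ∈ ⋃₀ U (m+2) := by rw [(hcov (m+2)).2]; trivial
          obtain ⟨A, hA, hyA⟩ := hy
          exact hCsub ⟨A, ⟨hA, hyA⟩, hyA⟩
        refine ⟨B, hB, fun z hz => hBsub ⟨C, ⟨hC, hyC⟩, hCsub hz⟩⟩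
    obtain ⟨B, hB, hBsub⟩ := hdown 3
    refine ⟨B, hU0 ▸ hB, fun z hz => ?_⟩
    have hd : dCh U z (y : X) < 1/4 := by
      have := Metric.mem_ball.1 (mem_preimage.1 hz)
      exact this
    have hD : Dfun U z (y : X) < (2:ℝ)⁻¹ ^ 1 := by
      have h1 := Dfun_le_two_dCh hcov hstar z (y : X)
      rw [pow_one]
      linarith
    have hw : Wrel U 2 z (y : X) := Wrel_of_Dfun_lt hstar hD
    obtain ⟨A, hA, hzA, hyA⟩ := hw
    have hA4 : A ∈ U 4 := by
      have e : 2 * 2 = 4 := by norm_num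
      rwa [e] at hA
    exact hBsub ⟨A, ⟨hA4, hyA⟩, hzA⟩
  exact pullback_PU (MCopy X) 𝒰 φ hφc hball

end Aux

/-- A `𝒰`-small partition of unity exists iff there is a sequence of open covers starting
with `𝒰` in which each cover star-refines the previous one. -/
theorem stmt3 (X : Type) [TopologicalSpace X] (𝒰 : Set (Set X)) (h : IsOpenCover 𝒰) :
    ExistsUSmallPU 𝒰 ↔
      ∃ U : ℕ → Set (Set X), U 0 = 𝒰 ∧ (∀ n, IsOpenCover (U n)) ∧
        ∀ n, StarRefines (U (n + 1)) (U n) := by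
  constructor
  · rintro ⟨S, f, hpu, hsmall⟩
    exact forward_dir h f hpu hsmall
  · rintro ⟨U, hU0, hcov, hstar⟩
    exact backward_dir U hU0 hcov hstar
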